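/- Let (γ, ℓ, ℓ⁽²⁾) be null metric hypersurface data on a finite-dimensional real vector space V with contravariant data (P, n, 0), γ positive semidefinite, and let u ∈ V* satisfy u(n) ≠ 0; set S := ker u. Then for every z ≠ 0, every linear functional α on S, and every f ∈ ℝ, there exists a unique ζ ∈ V such that the gauge-transformed data with parameters (z, ζ) satisfies: z(ℓ(X) + γ(ζ,X)) = α(X) for all X ∈ S, and z²(ℓ⁽²⁾ + 2ℓ(ζ) + γ(ζ,ζ)) = f. -/

import Mathlib

/-- Let `(γ, ℓ, ℓ2)` be null metric hypersurface data (contravariant data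
`(P, n, 0)`), with `γ` positive semidefinite, and let `u ∈ V*` satisfy `u n ≠ 0`;
set `S := ker u`.  Then for every `z ≠ 0`, every linear functional `α` on `S`, and every
`f ∈ ℝ`, there is a unique `ζ ∈ V` such that the gauge-transformed data with parameters
`(z, ζ)` satisfies `z(ℓ(X) + γ(ζ,X)) = α(X)` for all `X ∈ S` and
`z²(ℓ2 + 2ℓ(ζ) + γ(ζ,ζ)) = f`. -/
theorem stmt_4 {V : Type*} [AddCommGroup V] [Module ℝ V] [FiniteDimensional ℝ V]
    (γ : V →ₗ[ℝ] V →ₗ[ℝ] ℝ) (ℓ : Module.Dual ℝ V) (ℓ2 : ℝ)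
    (hγsymm : ∀ x y : V, γ x y = γ y x)
    (hnondeg : ∀ (W : V) (a : ℝ),
      (∀ (Z : V) (b : ℝ), γ W Z + a * ℓ Z + b * ℓ W + a * b * ℓ2 = 0) → W = 0 ∧ a = 0)
    (P : Module.Dual ℝ V →ₗ[ℝ] Module.Dual ℝ V →ₗ[ℝ] ℝ) (n : V)
    (hPsymm : ∀ α β : Module.Dual ℝ V, P α β = P β α)
    (h1 : ∀ v : V, γ n v = 0)
    (h2 : ℓ n = 1)
    (h3 : ∀ α : Module.Dual ℝ V, P α ℓ + ℓ2 * α n = 0)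
    (h4 : ∀ (α : Module.Dual ℝ V) (v : V), P α (γ v) + α n * ℓ v = α v)
    (hpsd : ∀ v : V, 0 ≤ γ v v)
    (u : Module.Dual ℝ V) (hlam : u n ≠ 0) :
    ∀ (z : ℝ), z ≠ 0 →
      ∀ (α : Module.Dual ℝ (LinearMap.ker u)) (f : ℝ),
        ∃! ζ : V,
          (∀ X : LinearMap.ker u, z * (ℓ (X : V) + γ ζ (X : V)) = α X) ∧
          z ^ 2 * (ℓ2 + 2 * ℓ ζ + γ ζ ζ) = f := by
  intro z hz α f
  -- projection onto S = ker u along n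
  set π : V →ₗ[ℝ] V := LinearMap.id - (u n)⁻¹ • u.smulRight n with hπdef
  have hπ_apply : ∀ v : V, π v = v - ((u n)⁻¹ * u v) • n := by
    intro v
    simp [hπdef, LinearMap.smulRight_apply, smul_smul]
  have hmem : ∀ v : V, π v ∈ LinearMap.ker u := by
    intro v
    simp only [LinearMap.mem_ker, hπ_apply, map_sub, map_smul, smul_eq_mul]
    field_simp
    ring
  set πS : V →ₗ[ℝ] LinearMap.ker u := π.codRestrict (LinearMap.ker u) hmem with hπSdef
  have hπn : π n = 0 := by
    rw [hπ_apply]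
    rw [inv_mul_cancel₀ hlam, one_smul, sub_self]
  have hπX : ∀ X : LinearMap.ker u, π (X : V) = (X : V) := by
    intro X
    rw [hπ_apply, X.2, mul_zero, zero_smul, sub_zero]
  set β : Module.Dual ℝ V := z⁻¹ • (α ∘ₗ πS) - ℓ ∘ₗ π with hβdef
  have hβ_apply : ∀ v : V, β v = z⁻¹ * α ⟨π v, hmem v⟩ - ℓ (π v) := by
    intro v; rfl
  have hβn : β n = 0 := by
    have : (⟨π n, hmem n⟩ : LinearMap.ker u) = 0 := Subtype.ext hπn
    rw [hβ_apply, this, hπn, map_zero, map_zero, mul_zero, sub_zero]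
  have hβX : ∀ X : LinearMap.ker u, β (X : V) = z⁻¹ * α X - ℓ (X : V) := by
    intro X
    have hXeq : (⟨π (X : V), hmem (X : V)⟩ : LinearMap.ker u) = X :=
      Subtype.ext (hπX X)
    rw [hβ_apply, hXeq, hπX X]
  set ζ0 : V := (Module.evalEquiv ℝ V).symm (P β) with hζ0def
  have hζ0 : ∀ w : Module.Dual ℝ V, w ζ0 = P β w := by
    intro w
    have h := LinearEquiv.apply_symm_apply (Module.evalEquiv ℝ V) (P β)
    calc w ζ0 = Module.evalEquiv ℝ V ζ0 w := by
          simp [Module.evalEquiv_apply, Module.Dual.eval_apply]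
      _ = P β w := by rw [h]
  have hγζ0 : ∀ v : V, γ ζ0 v = β v := by
    intro v
    have h4' := h4 β v
    rw [hβn, zero_mul, add_zero] at h4'
    rw [hγsymm ζ0 v, hζ0 (γ v)]
    exact h4'
  set t : ℝ := (f / z ^ 2 - ℓ2 - 2 * ℓ ζ0 - γ ζ0 ζ0) / 2 with htdef
  set ζ : V := ζ0 + t • n with hζdef
  have hγζ : ∀ v : V, γ ζ v = β v := by
    intro v
    rw [hζdef, map_add, map_smul, LinearMap.add_apply, LinearMap.smul_apply,
      hγζ0, h1 v, smul_zero, add_zero]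
  have hcond1 : ∀ X : LinearMap.ker u, z * (ℓ (X : V) + γ ζ (X : V)) = α X := by
    intro X
    rw [hγζ, hβX]
    field_simp
    try ring
  have hℓζ : ℓ ζ = ℓ ζ0 + t := by
    rw [hζdef, map_add, map_smul, h2, smul_eq_mul, mul_one]
  have hγζζ : γ ζ ζ = γ ζ0 ζ0 := by
    rw [hγζ ζ, hζdef, map_add, map_smul, smul_eq_mul, hβn, mul_zero, add_zero,
      ← hγζ0]
  have hcond2 : z ^ 2 * (ℓ2 + 2 * ℓ ζ + γ ζ ζ) = f := by
    rw [hℓζ, hγζζ, htdef]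
    have hz2 : z ^ 2 ≠ 0 := pow_ne_zero 2 hz
    field_simp
    try ring
  refine ⟨ζ, ⟨hcond1, hcond2⟩, ?_⟩
  rintro ζ' ⟨hc1, hc2⟩
  set w : V := ζ' - ζ with hwdef
  clear_value w
  have hγwS : ∀ X : LinearMap.ker u, γ w (X : V) = 0 := by
    intro X
    have e1 := hc1 X
    have e2 := hcond1 X
    have e3 : z * (ℓ (X : V) + γ ζ' (X : V)) = z * (ℓ (X : V) + γ ζ (X : V)) := by
      rw [e1, e2]
    have h' := mul_left_cancel₀ hz e3
    have h'' : γ ζ' (X : V) = γ ζ (X : V) := by linarith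
    rw [hwdef, map_sub, LinearMap.sub_apply, h'', sub_self]
  have hγwn : γ w n = 0 := by rw [hγsymm w n]; exact h1 w
  have hγw : ∀ v : V, γ w v = 0 := by
    intro v
    have hv : v = π v + ((u n)⁻¹ * u v) • n := by
      rw [hπ_apply]; abel
    have e : γ w v = γ w (π v) + ((u n)⁻¹ * u v) * γ w n := by
      conv_lhs => rw [hv]
      rw [map_add, map_smul, smul_eq_mul]
    rw [e, hγwS ⟨π v, hmem v⟩, hγwn]
    ring
  have hw : w = ℓ w • n := by
    have hmain := hnondeg (w - ℓ w • n) 0 ?_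
    · have h0 := hmain.1
      rw [sub_eq_zero] at h0
      exact h0
    · intro Z b
      have g1 : γ (w - ℓ w • n) Z = 0 := by
        rw [map_sub, map_smul, LinearMap.sub_apply, LinearMap.smul_apply,
          hγw Z, h1 Z, smul_zero, sub_zero]
      have g2 : ℓ (w - ℓ w • n) = 0 := by
        rw [map_sub, map_smul, h2, smul_eq_mul, mul_one, sub_self]
      rw [g1, g2]
      ring
  have hγζw : γ ζ w = 0 := by rw [hγsymm ζ w]; exact hγw ζ
  have hζ' : ζ' = ζ + w := by rw [hwdef]; abel
  have eℓ : ℓ ζ' = ℓ ζ + ℓ w := by rw [hζ', map_add]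
  have eγ : γ ζ' ζ' = γ ζ ζ := by
    rw [hζ']
    simp [map_add, LinearMap.add_apply, hγw, hγζw]
  have hℓw : ℓ w = 0 := by
    have e := hc2.trans hcond2.symm
    rw [eℓ, eγ] at e
    have hz2 : z ^ 2 ≠ 0 := pow_ne_zero 2 hz
    have e' := mul_left_cancel₀ hz2 e
    linarith
  have hw0 : w = 0 := by rw [hw, hℓw, zero_smul]
  rw [hwdef, sub_eq_zero] at hw0
  exact hw0
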